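/- Let P carry a pre-Garside structure (atomic partial product satisfying in addition: existence of right lcms and left lcms for pairs of atoms having common multiples, closure of P under multiplication by these lcms, and cancellativity of elements of P in M(P)). Then any two elements of P have a left greatest common divisor in P. -/
import Mathlib


/-- An atomic partial product on a set `P`: a partial product (with values in
`Option P`) with a unit, associativity, a finite set of atoms, and an `ℕ`-grading. -/
structure AtomicPartialProduct (P : Type*) where
  mul : P → P → Option P
  one : P
  one_mul : ∀ a, mul one a = some a
  mul_one : ∀ a, mul a one = some a
  /-- `ab` and `(ab)c` are defined iff `bc` and `a(bc)` are defined. -/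
  assoc_defined : ∀ a b c : P,
    (∃ ab, mul a b = some ab ∧ (mul ab c).isSome) ↔
    (∃ bc, mul b c = some bc ∧ (mul a bc).isSome)
  /-- When both are defined, `(ab)c = a(bc)`. -/
  assoc : ∀ a b c ab bc x y : P, mul a b = some ab → mul b c = some bc →
    mul ab c = some x → mul a bc = some y → x = y
  /-- The product of two non-unit elements is a non-unit. -/
  ne_one_mul : ∀ a b c : P, a ≠ one → b ≠ one → mul a b = some c → c ≠ one
  /-- There are finitely many atoms. -/
  atoms_finite : {p : P | p ≠ one ∧ ∀ a b, a ≠ one → b ≠ one → mul a b ≠ some p}.Finite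
  len : P → ℕ
  len_pos : ∀ p, p ≠ one → 0 < len p
  len_mul : ∀ a b c, mul a b = some c → len c = len a + len b

namespace AtomicPartialProduct

variable {P : Type*} (S : AtomicPartialProduct P)

/-- The set of atoms: non-unit elements which are not products of non-units. -/
def atoms : Set P :=
  {p : P | p ≠ S.one ∧ ∀ a b, a ≠ S.one → b ≠ S.one → S.mul a b ≠ some p}

/-- The defining relations of the monoid `M(P)`: `a · b = c` whenever the partial
product `ab` is defined and equal to `c`. -/
def rel : FreeMonoid P → FreeMonoid P → Prop := fun u v =>
  ∃ a b c : P, S.mul a b = some c ∧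
    u = FreeMonoid.of a * FreeMonoid.of b ∧ v = FreeMonoid.of c

/-- The monoid `M(P)` presented by generators `P` and relations `ab = c` whenever
the partial product is defined. -/
def M := (conGen S.rel).Quotient

instance : Monoid S.M := inferInstanceAs (Monoid (conGen S.rel).Quotient)

/-- The natural map `P → M(P)`. -/
def ι (p : P) : S.M := (conGen S.rel).mk' (FreeMonoid.of p)

/-- `a` left-divides `c` in `P`. -/
def leftDvd (a c : P) : Prop := ∃ b, S.mul a b = some c

/-- `a` right-divides `c` in `P`. -/
def rightDvd (a c : P) : Prop := ∃ b, S.mul b a = some c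

/-- `Δ` is a least common right multiple of `s` and `t` in `P`. -/
def IsRightLcm (s t Δ : P) : Prop :=
  S.leftDvd s Δ ∧ S.leftDvd t Δ ∧ ∀ m, S.leftDvd s m → S.leftDvd t m → S.leftDvd Δ m

/-- `Δ` is a least common left multiple of `s` and `t` in `P`. -/
def IsLeftLcm (s t Δ : P) : Prop :=
  S.rightDvd s Δ ∧ S.rightDvd t Δ ∧ ∀ m, S.rightDvd s m → S.rightDvd t m → S.rightDvd Δ m

end AtomicPartialProduct

/-- A pre-Garside structure: an atomic partial product satisfying the lcm axioms
(iv), (iv'), the closure axiom (v) and the cancellativity axiom (vi). -/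
structure PreGarside (P : Type*) extends AtomicPartialProduct P where
  /-- (iv) two atoms with a common right multiple have a right lcm. -/
  lcm_right : ∀ s ∈ toAtomicPartialProduct.atoms, ∀ t ∈ toAtomicPartialProduct.atoms,
    (∃ m, toAtomicPartialProduct.leftDvd s m ∧ toAtomicPartialProduct.leftDvd t m) →
    ∃ Δ, toAtomicPartialProduct.IsRightLcm s t Δ
  /-- (iv') two atoms with a common left multiple have a left lcm. -/
  lcm_left : ∀ s ∈ toAtomicPartialProduct.atoms, ∀ t ∈ toAtomicPartialProduct.atoms,
    (∃ m, toAtomicPartialProduct.rightDvd s m ∧ toAtomicPartialProduct.rightDvd t m) →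
    ∃ Δ, toAtomicPartialProduct.IsLeftLcm s t Δ
  /-- (v) if `as` and `at` are defined then so is `aΔ_{s,t}`. -/
  mul_lcm_defined : ∀ s ∈ toAtomicPartialProduct.atoms, ∀ t ∈ toAtomicPartialProduct.atoms,
    ∀ Δ a : P, toAtomicPartialProduct.IsRightLcm s t Δ →
    (toAtomicPartialProduct.mul a s).isSome → (toAtomicPartialProduct.mul a t).isSome →
    (toAtomicPartialProduct.mul a Δ).isSome
  /-- (vi) elements of `P` are cancellable in `M(P)` (right cancellation). -/
  cancel_right : ∀ (m : toAtomicPartialProduct.M) (a b : P),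
    toAtomicPartialProduct.ι a * m = toAtomicPartialProduct.ι b * m → a = b
  /-- (vi) elements of `P` are cancellable in `M(P)` (left cancellation). -/
  cancel_left : ∀ (m : toAtomicPartialProduct.M) (a b : P),
    m * toAtomicPartialProduct.ι a = m * toAtomicPartialProduct.ι b → a = b


namespace AtomicPartialProduct

variable {P : Type*} {S : AtomicPartialProduct P}

lemma assoc₂' {a b c f e : P} (h1 : S.mul b c = some f) (h2 : S.mul a f = some e) :
    ∃ d, S.mul a b = some d ∧ S.mul d c = some e := by
  obtain ⟨d, hd, hsome⟩ := (S.assoc_defined a b c).2 ⟨f, h1, by simp [h2]⟩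
  obtain ⟨x, hx⟩ := Option.isSome_iff_exists.1 hsome
  exact ⟨d, hd, hx.trans (congrArg some (S.assoc a b c d f x e hd h1 hx h2))⟩

lemma assoc₁' {a b c d e : P} (h1 : S.mul a b = some d) (h2 : S.mul d c = some e) :
    ∃ f, S.mul b c = some f ∧ S.mul a f = some e := by
  obtain ⟨f, hf, hsome⟩ := (S.assoc_defined a b c).1 ⟨d, h1, by simp [h2]⟩
  obtain ⟨x, hx⟩ := Option.isSome_iff_exists.1 hsome
  exact ⟨f, hf, hx.trans (congrArg some (S.assoc a b c d f e x h1 hf h2 hx).symm)⟩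

lemma one_leftDvd (a : P) : S.leftDvd S.one a := ⟨a, S.one_mul a⟩

lemma leftDvd_refl (a : P) : S.leftDvd a a := ⟨S.one, S.mul_one a⟩

lemma leftDvd_trans {a b c : P} (h1 : S.leftDvd a b) (h2 : S.leftDvd b c) : S.leftDvd a c := by
  obtain ⟨x, hx⟩ := h1; obtain ⟨y, hy⟩ := h2
  obtain ⟨f, _, hf⟩ := assoc₁' hx hy
  exact ⟨f, hf⟩

lemma len_le_of_leftDvd {a b : P} (h : S.leftDvd a b) : S.len a ≤ S.len b := by
  obtain ⟨c, hc⟩ := h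
  rw [S.len_mul a c b hc]; exact Nat.le_add_right _ _

lemma lift_defined {t x y w : P} (h : S.leftDvd x y) (hty : S.mul t y = some w) :
    ∃ tx, S.mul t x = some tx ∧ S.leftDvd tx w := by
  obtain ⟨z, hz⟩ := h
  obtain ⟨tx, h1, h2⟩ := assoc₂' hz hty
  exact ⟨tx, h1, z, h2⟩

lemma dvd_lift {t x y w tx : P} (htx : S.mul t x = some tx) (h : S.leftDvd x y)
    (hty : S.mul t y = some w) : S.leftDvd tx w := by
  obtain ⟨tx', h1, h2⟩ := lift_defined h hty
  have he : tx' = tx := Option.some.inj (h1.symm.trans htx)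
  exact he ▸ h2

lemma ι_mul {a b c : P} (h : S.mul a b = some c) : S.ι a * S.ι b = S.ι c := by
  show (conGen S.rel).mk' (FreeMonoid.of a) * (conGen S.rel).mk' (FreeMonoid.of b) = _
  rw [← map_mul]
  exact (Con.eq _).2 (ConGen.Rel.of _ _ ⟨a, b, c, h, rfl, rfl⟩)

lemma eq_one_of_len_eq_zero {p : P} (h : S.len p = 0) : p = S.one := by
  by_contra hp
  have := S.len_pos p hp
  omega

/-- Every non-unit element has an atom as a left divisor. -/
lemma exists_atom_leftDvd : ∀ n : ℕ, ∀ p : P, S.len p ≤ n → p ≠ S.one →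
    ∃ s c', s ∈ S.atoms ∧ S.mul s c' = some p := by
  intro n
  induction n using Nat.strong_induction_on with
  | _ n ih =>
  intro p hn hp
  by_cases hpa : p ∈ S.atoms
  · exact ⟨p, S.one, hpa, S.mul_one p⟩
  · simp only [atoms, Set.mem_setOf_eq, not_and, not_forall] at hpa
    obtain ⟨x, y, hx, hy, hxy⟩ := hpa hp
    rw [not_not] at hxy
    have hlen := S.len_mul x y p hxy
    have hy0 : 0 < S.len y := S.len_pos y hy
    have hx0 : 0 < S.len x := S.len_pos x hx
    obtain ⟨s, x', hs, hsx'⟩ := ih (S.len x) (by omega) x le_rfl hx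
    obtain ⟨c', hc'⟩ := leftDvd_trans ⟨x', hsx'⟩ ⟨y, hxy⟩
    exact ⟨s, c', hs, hc'⟩

end AtomicPartialProduct

namespace PreGarside

open AtomicPartialProduct

variable {P : Type*} (G : PreGarside P)

lemma cancel {s x y p : P} (h1 : G.toAtomicPartialProduct.mul s x = some p)
    (h2 : G.toAtomicPartialProduct.mul s y = some p) : x = y :=
  G.cancel_left _ x y (by rw [ι_mul h1, ι_mul h2])

lemma strip {s m₁ m d' d : P} (h1 : G.toAtomicPartialProduct.mul s m₁ = some m)
    (h2 : G.toAtomicPartialProduct.mul s d' = some d)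
    (h3 : G.toAtomicPartialProduct.leftDvd d m) : G.toAtomicPartialProduct.leftDvd d' m₁ := by
  obtain ⟨z, hz⟩ := h3
  obtain ⟨f, hf, hsf⟩ := assoc₁' h2 hz
  exact ⟨z, (G.cancel h1 hsf) ▸ hf⟩

private lemma measure_lt {L L₂ v c n : ℕ} (h1 : L₂ + 1 ≤ L) (h2 : v ≤ L₂)
    (h3 : L * L + c ≤ n) : L₂ * L₂ + v < n := by nlinarith

/-- Conditional right lcms: two elements with a common right multiple have a right lcm. -/
lemma exists_right_lcm_aux : ∀ n : ℕ, ∀ m c d : P,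
    G.toAtomicPartialProduct.len m * G.toAtomicPartialProduct.len m
      + G.toAtomicPartialProduct.len c ≤ n →
    G.toAtomicPartialProduct.leftDvd c m → G.toAtomicPartialProduct.leftDvd d m →
    ∃ e, G.toAtomicPartialProduct.leftDvd c e ∧ G.toAtomicPartialProduct.leftDvd d e ∧
      ∀ m', G.toAtomicPartialProduct.leftDvd c m' → G.toAtomicPartialProduct.leftDvd d m' →
        G.toAtomicPartialProduct.leftDvd e m' := by
  intro n
  induction n using Nat.strong_induction_on with
  | _ n ih =>
  intro m c d hn hc hd
  set S := G.toAtomicPartialProduct with hSdef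
  by_cases hc1 : c = S.one
  · exact ⟨d, hc1 ▸ one_leftDvd d, leftDvd_refl d, fun m' _ h => h⟩
  by_cases hd1 : d = S.one
  · exact ⟨c, leftDvd_refl c, hd1 ▸ one_leftDvd c, fun m' h _ => h⟩
  obtain ⟨s, c', hs, hsc'⟩ := exists_atom_leftDvd (S.len c) c le_rfl hc1
  obtain ⟨t, d', ht, htd'⟩ := exists_atom_leftDvd (S.len d) d le_rfl hd1
  have hs1 : s ≠ S.one := hs.1
  have ht1 : t ≠ S.one := ht.1
  have hsm : S.leftDvd s m := leftDvd_trans ⟨c', hsc'⟩ hc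
  have htm : S.leftDvd t m := leftDvd_trans ⟨d', htd'⟩ hd
  by_cases hc'1 : c' = S.one
  · -- `c` is the atom `s`
    have hcs : c = s := Option.some.inj ((hc'1 ▸ hsc' : S.mul s S.one = some c).symm.trans
      (S.mul_one s))
    subst hcs
    obtain ⟨Δ, hΔs, hΔt, hΔmin⟩ := G.lcm_right c hs t ht ⟨m, hsm, htm⟩
    obtain ⟨u, hu⟩ := hΔs
    obtain ⟨v, hv⟩ := hΔt
    have hΔm : S.leftDvd Δ m := hΔmin m hsm htm
    obtain ⟨m₂, htm₂⟩ := htm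
    have hvm₂ : S.leftDvd v m₂ := G.strip htm₂ hv hΔm
    have hd'm₂ : S.leftDvd d' m₂ := G.strip htm₂ htd' hd
    have hmlen := S.len_mul t m₂ m htm₂
    have ht0 : 0 < S.len t := S.len_pos t ht1
    have hkey : S.len m₂ * S.len m₂ + S.len v < n :=
      measure_lt (by omega) (len_le_of_leftDvd hvm₂) hn
    obtain ⟨e₂, hve₂, hd'e₂, hmin₂⟩ := ih _ hkey m₂ v d' le_rfl hvm₂ hd'm₂
    have he₂m₂ : S.leftDvd e₂ m₂ := hmin₂ m₂ hvm₂ hd'm₂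
    obtain ⟨e, hte₂, hem⟩ := lift_defined he₂m₂ htm₂
    have hΔe : S.leftDvd Δ e := dvd_lift hv hve₂ hte₂
    have hce : S.leftDvd c e := leftDvd_trans ⟨u, hu⟩ hΔe
    have hde : S.leftDvd d e := dvd_lift htd' hd'e₂ hte₂
    refine ⟨e, hce, hde, fun m' hcm' hdm' => ?_⟩
    have htm' : S.leftDvd t m' := leftDvd_trans ⟨d', htd'⟩ hdm'
    have hΔm' : S.leftDvd Δ m' := hΔmin m' hcm' htm'
    obtain ⟨m₂', htm₂'⟩ := htm'
    have hvm₂' : S.leftDvd v m₂' := G.strip htm₂' hv hΔm'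
    have hd'm₂' : S.leftDvd d' m₂' := G.strip htm₂' htd' hdm'
    exact dvd_lift hte₂ (hmin₂ m₂' hvm₂' hd'm₂') htm₂'
  · -- `c = s c'` with `c' ≠ 1`
    have hs0 : 0 < S.len s := S.len_pos s hs1
    have hc'0 : 0 < S.len c' := S.len_pos c' hc'1
    have hclen := S.len_mul s c' c hsc'
    have hkey1 : S.len m * S.len m + S.len s < n := by
      have : S.len m * S.len m + S.len s < S.len m * S.len m + S.len c := by omega
      omega
    obtain ⟨E, hsE, hdE, hminE⟩ := ih _ hkey1 m s d le_rfl hsm hd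
    have hEm : S.leftDvd E m := hminE m hsm hd
    obtain ⟨w, hw⟩ := hsE
    obtain ⟨m₁, hsm₁⟩ := hsm
    have hc'm₁ : S.leftDvd c' m₁ := G.strip hsm₁ hsc' hc
    have hwm₁ : S.leftDvd w m₁ := G.strip hsm₁ hw hEm
    have hmlen := S.len_mul s m₁ m hsm₁
    have hkey2 : S.len m₁ * S.len m₁ + S.len c' < n :=
      measure_lt (by omega) (len_le_of_leftDvd hc'm₁) hn
    obtain ⟨e₁, hc'e₁, hwe₁, hmin₁⟩ := ih _ hkey2 m₁ c' w le_rfl hc'm₁ hwm₁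
    have he₁m₁ : S.leftDvd e₁ m₁ := hmin₁ m₁ hc'm₁ hwm₁
    obtain ⟨e, hse₁, hem⟩ := lift_defined he₁m₁ hsm₁
    have hce : S.leftDvd c e := dvd_lift hsc' hc'e₁ hse₁
    have hEe : S.leftDvd E e := dvd_lift hw hwe₁ hse₁
    have hde : S.leftDvd d e := leftDvd_trans hdE hEe
    refine ⟨e, hce, hde, fun m' hcm' hdm' => ?_⟩
    have hsm' : S.leftDvd s m' := leftDvd_trans ⟨c', hsc'⟩ hcm'
    have hEm' : S.leftDvd E m' := hminE m' hsm' hdm'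
    obtain ⟨m₁', hsm₁'⟩ := hsm'
    have hc'm₁' : S.leftDvd c' m₁' := G.strip hsm₁' hsc' hcm'
    have hwm₁' : S.leftDvd w m₁' := G.strip hsm₁' hw hEm'
    exact dvd_lift hse₁ (hmin₁ m₁' hc'm₁' hwm₁') hsm₁'

end PreGarside


/-- In a pre-Garside structure, any two elements of `P` have a left gcd in `P`. -/
theorem exists_left_gcd {P : Type*} (G : PreGarside P) (a b : P) :
    ∃ g : P, G.toAtomicPartialProduct.leftDvd g a ∧ G.toAtomicPartialProduct.leftDvd g b ∧
      ∀ d : P, G.toAtomicPartialProduct.leftDvd d a → G.toAtomicPartialProduct.leftDvd d b →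
        G.toAtomicPartialProduct.leftDvd d g := by
  classical
  set S := G.toAtomicPartialProduct with hSdef
  set A : Set ℕ := {n | ∃ g : P, S.leftDvd g a ∧ S.leftDvd g b ∧ S.len g = n} with hA
  have hAne : A.Nonempty := ⟨S.len S.one, S.one,
    AtomicPartialProduct.one_leftDvd a, AtomicPartialProduct.one_leftDvd b, rfl⟩
  have hAbdd : BddAbove A := ⟨S.len a, fun n hn => by
    obtain ⟨g, hga, _, hlg⟩ := hn
    exact hlg ▸ AtomicPartialProduct.len_le_of_leftDvd hga⟩
  obtain ⟨g, hga, hgb, hlg⟩ := Nat.sSup_mem hAne hAbdd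
  refine ⟨g, hga, hgb, fun d hda hdb => ?_⟩
  obtain ⟨e, hde, hge, hmine⟩ := G.exists_right_lcm_aux
    (S.len a * S.len a + S.len d) a d g le_rfl hda hga
  have hea : S.leftDvd e a := hmine a hda hga
  have heb : S.leftDvd e b := hmine b hdb hgb
  have hle : S.len e ≤ S.len g := by
    rw [hlg]
    exact le_csSup hAbdd ⟨e, hea, heb, rfl⟩
  obtain ⟨h, hh⟩ := hge
  have hlen := S.len_mul g h e hh
  have hh1 : h = S.one := AtomicPartialProduct.eq_one_of_len_eq_zero (by omega)
  have heg : e = g := Option.some.inj (((hh1 ▸ hh : S.mul g S.one = some e).symm.trans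
    (S.mul_one g)).symm).symm
  exact heg ▸ hde
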